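/- Let m₀ ≥ 1 and m ≥ m₀ be integers, and let f : ℝ → ℝ be 2m-times continuously differentiable. Suppose that f^{(2j−1)}(x) → 0 as x → ∞ for every j = m₀, …, m−1, and that ∫_0^{∞} |f^{(2m−1)}(x)| dx < ∞. Let F be any antiderivative of f. Then the limit lim_{n→∞} ( ∑_{k=0}^{n−1} f(k) − G^EM_{m₀,F}(n) ) exists and equals f(0) − G^EM_{m,F}(1) + R^EM_{m,f}(∞), where R^EM_{m,f}(∞) := (1/(2m−1)!) · ∫_0^{∞} f^{(2m−1)}(x) · B_{2m−1}(x − ⌊x⌋) dx. -/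

import Mathlib

open MeasureTheory

section EMAux

open Polynomial intervalIntegral

/-- Real Bernoulli polynomial value. -/
noncomputable def emBP (K : ℕ) (x : ℝ) : ℝ := Polynomial.aeval x (Polynomial.bernoulli K)

lemma emBP_eq (K : ℕ) (x : ℝ) :
    emBP K x = ((Polynomial.bernoulli K).map (algebraMap ℚ ℝ)).eval x := by
  simp [emBP, Polynomial.aeval_def, Polynomial.eval_map]

lemma emBP_continuous (K : ℕ) (c : ℝ) : Continuous (fun x => emBP K (x - c)) := by
  simp only [emBP_eq]; exact (Polynomial.continuous _).comp (continuous_id.sub continuous_const)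

lemma emBP_continuous' (K : ℕ) : Continuous (emBP K) := by
  have h : emBP K = fun x => ((Polynomial.bernoulli K).map (algebraMap ℚ ℝ)).eval x :=
    funext fun x => emBP_eq K x
  rw [h]; exact Polynomial.continuous _

lemma emBP_hasDerivAt (K : ℕ) (c x : ℝ) :
    HasDerivAt (fun y => emBP (K+1) (y - c)) ((K+1) * emBP K (x - c)) x := by
  have h1 : HasDerivAt (fun y : ℝ => y - c) 1 x := (hasDerivAt_id x).sub_const c
  have h2 := (Polynomial.hasDerivAt ((Polynomial.bernoulli (K+1)).map (algebraMap ℚ ℝ))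
    (x - c)).comp x h1
  have h3 : (derivative ((Polynomial.bernoulli (K+1)).map (algebraMap ℚ ℝ))).eval (x - c)
      = (K+1) * emBP K (x - c) := by
    rw [Polynomial.derivative_map, Polynomial.derivative_bernoulli_add_one, emBP_eq]
    simp [Polynomial.map_mul]
  rw [emBP_eq] at h3
  simp only [emBP_eq]
  rw [← h3]
  simpa only [mul_one, Function.comp_def] using h2

lemma emBP_zero' (K : ℕ) : emBP K 0 = ((bernoulli K : ℚ) : ℝ) := by
  have h := Polynomial.aeval_algebraMap_apply ℝ (0:ℚ) (Polynomial.bernoulli K)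
  simp only [map_zero] at h
  rw [emBP, h]
  simp

lemma emBP_one' (K : ℕ) (hK : K ≠ 1) : emBP K 1 = ((bernoulli K : ℚ) : ℝ) := by
  have h := Polynomial.aeval_algebraMap_apply ℝ (1:ℚ) (Polynomial.bernoulli K)
  simp only [map_one] at h
  rw [emBP, h]
  simp [Polynomial.bernoulli_eval_one, bernoulli_eq_bernoulli'_of_ne_one hK]

lemma emBP_one_1 : emBP 1 1 = (1:ℝ)/2 := by
  have h := Polynomial.aeval_algebraMap_apply ℝ (1:ℚ) (Polynomial.bernoulli 1)
  simp only [map_one] at h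
  rw [emBP, h]
  rw [show (Polynomial.aeval (1:ℚ)) (Polynomial.bernoulli 1) = (Polynomial.bernoulli 1).eval 1 from
    congrFun (Polynomial.coe_aeval_eq_eval (1:ℚ)) _, Polynomial.bernoulli_eval_one]
  norm_num [bernoulli'_one]

lemma emBP_zero_1 : emBP 1 0 = -(1:ℝ)/2 := by
  rw [emBP_zero']
  norm_num [_root_.bernoulli_one]

variable {m : ℕ} {f : ℝ → ℝ}

lemma em_itd_cont (hf : ContDiff ℝ (2*m) f) (K : ℕ) (hK : K ≤ 2*m) :
    Continuous (iteratedDeriv K f) :=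
  hf.continuous_iteratedDeriv K (by exact_mod_cast hK)

lemma em_itd_hasDerivAt (hf : ContDiff ℝ (2*m) f) (K : ℕ) (hK : K < 2*m) (x : ℝ) :
    HasDerivAt (iteratedDeriv K f) (iteratedDeriv (K+1) f x) x := by
  have h := (hf.differentiable_iteratedDeriv K (by exact_mod_cast hK) x).hasDerivAt
  rw [iteratedDeriv_succ]
  exact h

lemma em_ibp_step (hf : ContDiff ℝ (2*m) f) (K : ℕ) (hK1 : 1 ≤ K) (hK : K + 1 ≤ 2*m) (a : ℝ) :
    (∫ x in a..(a+1), emBP K (x - a) / (K.factorial : ℝ) * iteratedDeriv K f x)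
    = ((bernoulli (K+1) : ℚ) : ℝ) / ((K+1).factorial : ℝ)
        * (iteratedDeriv K f (a+1) - iteratedDeriv K f a)
      - ∫ x in a..(a+1), emBP (K+1) (x - a) / ((K+1).factorial : ℝ)
          * iteratedDeriv (K+1) f x := by
  set u : ℝ → ℝ := fun x => emBP (K+1) (x - a) / ((K+1).factorial : ℝ) with hu_def
  set u' : ℝ → ℝ := fun x => emBP K (x - a) / (K.factorial : ℝ) with hu'_def
  have hu : ∀ x ∈ Set.uIcc a (a+1), HasDerivAt u (u' x) x := by
    intro x _
    have h := (emBP_hasDerivAt K a x).div_const ((K+1).factorial : ℝ)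
    convert h using 1
    rfl
    rfl
    have h1 : ((K+1).factorial : ℝ) = (K+1) * (K.factorial : ℝ) := by
      rw [Nat.factorial_succ]; push_cast; ring
    rw [hu'_def, h1]
    have hK0 : (K.factorial : ℝ) ≠ 0 := Nat.cast_ne_zero.mpr (Nat.factorial_ne_zero K)
    have hK10 : ((K:ℝ)+1) ≠ 0 := by positivity
    field_simp
  have hv : ∀ x ∈ Set.uIcc a (a+1),
      HasDerivAt (iteratedDeriv K f) (iteratedDeriv (K+1) f x) x :=
    fun x _ => em_itd_hasDerivAt hf K (by omega) x
  have hu' : IntervalIntegrable u' volume a (a+1) :=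
    (((emBP_continuous K a).div_const _)).intervalIntegrable a (a+1)
  have hv' : IntervalIntegrable (iteratedDeriv (K+1) f) volume a (a+1) :=
    (em_itd_cont hf (K+1) hK).intervalIntegrable a (a+1)
  have this := intervalIntegral.integral_mul_deriv_eq_deriv_mul hu hv hu' hv'
  have hval : u (a+1) = ((bernoulli (K+1) : ℚ) : ℝ) / ((K+1).factorial : ℝ) ∧
      u a = ((bernoulli (K+1) : ℚ) : ℝ) / ((K+1).factorial : ℝ) := by
    constructor
    · simp only [hu_def, add_sub_cancel_left, emBP_one' (K+1) (by omega)]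
    · simp only [hu_def, sub_self, emBP_zero']
  rw [hval.1, hval.2] at this
  linarith [this]

lemma em_chain (hf : ContDiff ℝ (2*m) f) (hm : 1 ≤ m) (p : ℕ) (hp : p ≤ m - 1) (a : ℝ) :
    (∫ x in a..(a+1), emBP 1 (x - a) / ((1:ℕ).factorial : ℝ) * iteratedDeriv 1 f x)
    = (∑ j ∈ Finset.Icc 1 p, ((bernoulli (2*j) : ℚ) : ℝ) / ((2*j).factorial : ℝ)
        * (iteratedDeriv (2*j - 1) f (a+1) - iteratedDeriv (2*j-1) f a))
      + ∫ x in a..(a+1), emBP (2*p+1) (x - a) / ((2*p+1).factorial : ℝ)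
          * iteratedDeriv (2*p+1) f x := by
  induction p with
  | zero => simp
  | succ p ih =>
    have h1 := ih (by omega)
    have h2 := em_ibp_step hf (2*p+1) (by omega) (by omega) a
    have h3 := em_ibp_step hf (2*p+1+1) (by omega) (by omega) a
    have hodd : ((bernoulli (2*p+1+1+1) : ℚ) : ℝ) = 0 := by
      rw [bernoulli_eq_bernoulli'_of_ne_one (by omega),
        bernoulli'_eq_zero_of_odd ⟨p+1, by omega⟩ (by omega)]
      simp
    rw [hodd] at h3
    rw [Finset.sum_Icc_succ_top (by omega : 1 ≤ p + 1)]
    have e1 : 2*(p+1) = 2*p+1+1 := by omega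
    rw [e1, show 2*p+1+1 - 1 = 2*p+1 from by omega]
    rw [h1, h2, h3]
    ring

lemma em_base (hf : ContDiff ℝ (2*m) f) (hm : 1 ≤ m) (a : ℝ) :
    ∫ x in a..(a+1), f x = (f a + f (a+1))/2
      - ∫ x in a..(a+1), emBP 1 (x - a) / ((1:ℕ).factorial : ℝ) * iteratedDeriv 1 f x := by
  have hcf : Continuous f := by
    have := em_itd_cont hf 0 (by omega)
    rwa [iteratedDeriv_zero] at this
  have hu : ∀ x ∈ Set.uIcc a (a+1), HasDerivAt (fun y => emBP 1 (y - a)) ((1:ℝ)) x := by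
    intro x _
    have h := emBP_hasDerivAt 0 a x
    simpa [emBP] using h
  have hv : ∀ x ∈ Set.uIcc a (a+1), HasDerivAt f (iteratedDeriv 1 f x) x := by
    intro x _
    have h := em_itd_hasDerivAt hf 0 (by omega) x
    rwa [iteratedDeriv_zero] at h
  have hu' : IntervalIntegrable (fun _ => (1:ℝ)) volume a (a+1) :=
    intervalIntegrable_const
  have hv' : IntervalIntegrable (iteratedDeriv 1 f) volume a (a+1) :=
    (em_itd_cont hf 1 (by omega)).intervalIntegrable a (a+1)
  have h := intervalIntegral.integral_mul_deriv_eq_deriv_mul hu hv hu' hv'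
  simp only [add_sub_cancel_left, sub_self, emBP_one_1, emBP_zero_1, one_mul] at h
  simp only [Nat.factorial_one, Nat.cast_one, div_one]
  linarith [h]

lemma em_interval (hf : ContDiff ℝ (2*m) f) (hm : 1 ≤ m) {F : ℝ → ℝ}
    (hF : ∀ x : ℝ, HasDerivAt F (f x) x) (a : ℝ) :
    f (a+1) = (F (a+1) - F a) + (f (a+1) - f a)/2
      + (∑ j ∈ Finset.Icc 1 (m-1), ((bernoulli (2*j) : ℚ) : ℝ) / ((2*j).factorial : ℝ)
        * (iteratedDeriv (2*j - 1) f (a+1) - iteratedDeriv (2*j-1) f a))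
      + ∫ x in a..(a+1), emBP (2*m-1) (x - a) / ((2*m-1).factorial : ℝ)
          * iteratedDeriv (2*m-1) f x := by
  have hcf : Continuous f := by
    have := em_itd_cont hf 0 (by omega); rwa [iteratedDeriv_zero] at this
  have hint : ∫ x in a..(a+1), f x = F (a+1) - F a :=
    intervalIntegral.integral_eq_sub_of_hasDerivAt (fun x _ => hF x)
      (hcf.intervalIntegrable a (a+1))
  have hb := em_base hf hm a
  have hc := em_chain hf hm (m-1) le_rfl a
  rw [show 2*(m-1)+1 = 2*m-1 from by omega] at hc
  rw [hint] at hb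
  rw [hc] at hb
  linarith

lemma em_fract_ae (k : ℕ) : ∀ᵐ (x:ℝ), x ∈ Set.Ioc (k:ℝ) ((k:ℝ)+1) → Int.fract x = x - k := by
  have h0 : (volume : Measure ℝ) {((k:ℝ)+1)} = 0 := measure_singleton _
  filter_upwards [measure_eq_zero_iff_ae_notMem.mp h0] with x hx hmem
  have h1 : x ≠ (k:ℝ)+1 := by simpa using hx
  have h2 : (k:ℝ) ≤ x := le_of_lt hmem.1
  have h3 : x < (k:ℝ)+1 := lt_of_le_of_ne hmem.2 h1
  have hfl : ⌊x⌋ = (k:ℤ) := by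
    rw [Int.floor_eq_iff]
    constructor
    · push_cast; linarith
    · push_cast; linarith
  rw [Int.fract, hfl]
  push_cast
  ring

end EMAux

/-- `G^EM_{m,F}(x) := F(x−1) + F′(x−1)/2 + ∑_{j=1}^{m−1} (B_{2j}/(2j)!)·F^{(2j)}(x−1)`,
where `B_k` is the `k`-th Bernoulli number (`B₁ = −1/2`). -/
noncomputable def emG (m : ℕ) (F : ℝ → ℝ) (x : ℝ) : ℝ :=
  F (x - 1) + deriv F (x - 1) / 2 +
    ∑ j ∈ Finset.Icc 1 (m - 1),
      ((bernoulli (2 * j) : ℚ) : ℝ) / ((2 * j).factorial : ℝ) * iteratedDeriv (2 * j) F (x - 1)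

/-- Summing (possibly divergent) series by the Euler–Maclaurin formula: if
`f^{(2j−1)}(x) → 0` as `x → ∞` for `j = m₀,…,m−1` and `∫_0^∞ |f^{(2m−1)}| < ∞`, then
`∑_{k=0}^{n−1} f(k) − G^EM_{m₀,F}(n)` converges as `n → ∞` to
`f(0) − G^EM_{m,F}(1) + R^EM_{m,f}(∞)`. -/
theorem em_generalized_sum (m₀ m : ℕ) (hm₀ : 1 ≤ m₀) (hm : m₀ ≤ m)
    (f F : ℝ → ℝ) (hf : ContDiff ℝ (2 * m) f) (hF : ∀ x : ℝ, HasDerivAt F (f x) x)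
    (hto0 : ∀ j : ℕ, m₀ ≤ j → j ≤ m - 1 →
      Filter.Tendsto (iteratedDeriv (2 * j - 1) f) Filter.atTop (nhds 0))
    (hint : IntegrableOn (iteratedDeriv (2 * m - 1) f) (Set.Ici (0 : ℝ))) :
    Filter.Tendsto
      (fun n : ℕ => ∑ k ∈ Finset.range n, f k - emG m₀ F (n : ℝ))
      Filter.atTop
      (nhds (f 0 - emG m F 1 +
        1 / ((2 * m - 1).factorial : ℝ) *
          ∫ x in Set.Ici (0 : ℝ),
            iteratedDeriv (2 * m - 1) f x *
              (Polynomial.aeval (Int.fract x) (Polynomial.bernoulli (2 * m - 1)) : ℝ))) := by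
  have hm1 : 1 ≤ m := le_trans hm₀ hm
  -- abbreviations
  set c : ℕ → ℝ := fun j => ((bernoulli (2*j) : ℚ) : ℝ) / ((2*j).factorial : ℝ) with hc_def
  set d : ℕ → ℝ → ℝ := fun j => iteratedDeriv (2*j - 1) f with hd_def
  set g : ℝ → ℝ := fun x => iteratedDeriv (2*m-1) f x * emBP (2*m-1) (Int.fract x) with hg_def
  set C : ℝ := 1 / ((2 * m - 1).factorial : ℝ) with hC_def
  have hderivF : deriv F = f := funext fun x => (hF x).deriv
  have hitF : ∀ j : ℕ, 1 ≤ j → iteratedDeriv (2*j) F = d j := by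
    intro j hj
    have h1 : 2*j = (2*j - 1) + 1 := by omega
    rw [h1, iteratedDeriv_succ', hderivF, hd_def]
  -- integrability of g
  have hg_meas : AEStronglyMeasurable (fun x : ℝ => emBP (2*m-1) (Int.fract x)) :=
    ((emBP_continuous' (2*m-1)).measurable.comp measurable_fract).aestronglyMeasurable
  have hg_bdd : ∃ C, ∀ x : ℝ, ‖emBP (2*m-1) (Int.fract x)‖ ≤ C := by
    obtain ⟨B, hB⟩ := (isCompact_Icc (a := (0:ℝ)) (b := 1)).exists_bound_of_continuousOn
      (emBP_continuous' (2*m-1)).continuousOn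
    exact ⟨B, fun x => hB _ ⟨Int.fract_nonneg x, le_of_lt (Int.fract_lt_one x)⟩⟩
  have hg_int : IntegrableOn g (Set.Ici (0:ℝ)) := by
    have h := (hint.bdd_mul (hg_meas.restrict) (Filter.Eventually.of_forall hg_bdd.choose_spec))
    exact h.congr (Filter.Eventually.of_forall fun x => mul_comm _ _)
  -- interval integrability of g on [k, k+1]
  have hg_intInt : ∀ k : ℕ, IntervalIntegrable g volume (k:ℝ) ((k:ℝ)+1) := by
    intro k
    rw [intervalIntegrable_iff_integrableOn_Ioc_of_le (by linarith : (k:ℝ) ≤ (k:ℝ)+1)]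
    have hcont : Continuous (fun x : ℝ => iteratedDeriv (2*m-1) f x * emBP (2*m-1) (x - k)) :=
      (em_itd_cont hf _ (by omega)).mul (emBP_continuous _ _)
    apply (hcont.integrableOn_Ioc).congr
    have h1 : ∀ᵐ x ∂(volume.restrict (Set.Ioc (k:ℝ) ((k:ℝ)+1))),
        x ∈ Set.Ioc (k:ℝ) ((k:ℝ)+1) := ae_restrict_mem measurableSet_Ioc
    have h2 := ae_restrict_of_ae (μ := volume) (s := Set.Ioc (k:ℝ) ((k:ℝ)+1)) (em_fract_ae k)
    filter_upwards [h1, h2] with x hx hfx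
    rw [hg_def]
    simp only
    rw [hfx hx]
  -- per-interval identity with fract
  have hstep : ∀ k : ℕ,
      f ((k:ℝ)+1) = (F ((k:ℝ)+1) - F k) + (f ((k:ℝ)+1) - f k)/2
        + (∑ j ∈ Finset.Icc 1 (m-1), c j * (d j ((k:ℝ)+1) - d j k))
        + C * ∫ x in (k:ℝ)..((k:ℝ)+1), g x := by
    intro k
    have h := em_interval hf hm1 hF (k:ℝ)
    have hcongr : (∫ x in (k:ℝ)..((k:ℝ)+1),
          emBP (2*m-1) (x - k) / ((2*m-1).factorial : ℝ) * iteratedDeriv (2*m-1) f x)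
        = C * ∫ x in (k:ℝ)..((k:ℝ)+1), g x := by
      rw [← intervalIntegral.integral_const_mul]
      apply intervalIntegral.integral_congr_ae
      have h2 := em_fract_ae k
      filter_upwards [h2] with x hx hmem
      have hmem' : x ∈ Set.Ioc (k:ℝ) ((k:ℝ)+1) := by
        rwa [Set.uIoc_of_le (by linarith : (k:ℝ) ≤ (k:ℝ)+1)] at hmem
      rw [hg_def]
      simp only
      rw [hx hmem', hC_def]
      ring
    rw [hcongr] at h
    exact h
  -- summed identity
  have hsum : ∀ N : ℕ,
      ∑ k ∈ Finset.range (N+1), f k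
      = f 0 + (F N - F 0) + (f N - f 0)/2
        + (∑ j ∈ Finset.Icc 1 (m-1), c j * (d j N - d j 0))
        + C * ∫ x in (0:ℝ)..(N:ℝ), g x := by
    intro N
    rw [Finset.sum_range_succ']
    push_cast
    have hsum1 : ∑ k ∈ Finset.range N, f ((k:ℝ)+1)
        = (∑ k ∈ Finset.range N, (F ((k:ℝ)+1) - F k))
          + (∑ k ∈ Finset.range N, (f ((k:ℝ)+1) - f k)/2)
          + (∑ k ∈ Finset.range N, ∑ j ∈ Finset.Icc 1 (m-1), c j * (d j ((k:ℝ)+1) - d j k))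
          + (∑ k ∈ Finset.range N, C * ∫ x in (k:ℝ)..((k:ℝ)+1), g x) := by
      rw [← Finset.sum_add_distrib, ← Finset.sum_add_distrib, ← Finset.sum_add_distrib]
      exact Finset.sum_congr rfl fun k _ => hstep k
    have hcast : ∀ k : ℕ, ((k:ℝ)+1) = ((k+1 : ℕ) : ℝ) := by intro k; push_cast; ring
    have htel1 : ∑ k ∈ Finset.range N, (F ((k:ℝ)+1) - F k) = F N - F 0 := by
      have h := Finset.sum_range_sub (fun k : ℕ => F (k:ℝ)) N
      push_cast at h
      exact h
    have htel2 : ∑ k ∈ Finset.range N, (f ((k:ℝ)+1) - f k)/2 = (f N - f 0)/2 := by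
      rw [← Finset.sum_div]
      have h := Finset.sum_range_sub (fun k : ℕ => f (k:ℝ)) N
      push_cast at h
      rw [h]
    have htel3 : ∑ k ∈ Finset.range N, ∑ j ∈ Finset.Icc 1 (m-1), c j * (d j ((k:ℝ)+1) - d j k)
        = ∑ j ∈ Finset.Icc 1 (m-1), c j * (d j N - d j 0) := by
      rw [Finset.sum_comm]
      refine Finset.sum_congr rfl fun j _ => ?_
      rw [← Finset.mul_sum]
      congr 1
      have h := Finset.sum_range_sub (fun k : ℕ => d j (k:ℝ)) N
      push_cast at h
      exact h
    have htel4 : ∑ k ∈ Finset.range N, (C * ∫ x in (k:ℝ)..((k:ℝ)+1), g x)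
        = C * ∫ x in (0:ℝ)..(N:ℝ), g x := by
      rw [← Finset.mul_sum]
      congr 1
      have h := intervalIntegral.sum_integral_adjacent_intervals
        (μ := volume) (a := fun k : ℕ => (k:ℝ)) (n := N) (f := g) ?_
      · push_cast at h
        exact h
      · intro k _
        push_cast
        exact hg_intInt k
    rw [hsum1, htel1, htel2, htel3, htel4]
    push_cast
    ring
  -- expression for the difference
  have hsplit : ∀ t : ℝ,
      ∑ j ∈ Finset.Icc 1 (m-1), c j * d j t
      = (∑ j ∈ Finset.Icc 1 (m₀-1), c j * d j t)
        + ∑ j ∈ Finset.Icc m₀ (m-1), c j * d j t := by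
    intro t
    rw [show Finset.Icc 1 (m-1) = Finset.Ioc 0 (m-1) from Finset.Icc_add_one_left_eq_Ioc 0 (m-1),
      show Finset.Icc 1 (m₀-1) = Finset.Ioc 0 (m₀-1) from Finset.Icc_add_one_left_eq_Ioc 0 (m₀-1),
      show Finset.Icc m₀ (m-1) = Finset.Ioc (m₀-1) (m-1) from by
        rw [← Finset.Icc_add_one_left_eq_Ioc]; congr 1; omega]
    exact (Finset.sum_Ioc_consecutive _ (by omega) (by omega)).symm
  have hemG : ∀ N : ℕ, emG m₀ F ((N+1 : ℕ) : ℝ)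
      = F N + f N / 2 + ∑ j ∈ Finset.Icc 1 (m₀-1), c j * d j N := by
    intro N
    rw [emG]
    rw [show (((N+1 : ℕ)):ℝ) - 1 = (N:ℝ) from by push_cast; ring, hderivF]
    congr 1
    refine Finset.sum_congr rfl fun j hj => ?_
    rw [hitF j (Finset.mem_Icc.mp hj).1]
  have hemG1 : emG m F 1
      = F 0 + f 0 / 2 + ∑ j ∈ Finset.Icc 1 (m-1), c j * d j 0 := by
    rw [emG]
    rw [show (1:ℝ) - 1 = (0:ℝ) from by ring, hderivF]
    congr 1
    refine Finset.sum_congr rfl fun j hj => ?_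
    rw [hitF j (Finset.mem_Icc.mp hj).1]
  have hseq : ∀ N : ℕ,
      (∑ k ∈ Finset.range (N+1), f k) - emG m₀ F ((N+1 : ℕ) : ℝ)
      = (f 0 - emG m F 1) + C * (∫ x in (0:ℝ)..(N:ℝ), g x)
        + ∑ j ∈ Finset.Icc m₀ (m-1), c j * d j N := by
    intro N
    rw [hsum N, hemG N, hemG1]
    have h1 : ∑ j ∈ Finset.Icc 1 (m-1), c j * (d j N - d j 0)
        = (∑ j ∈ Finset.Icc 1 (m-1), c j * d j N)
          - ∑ j ∈ Finset.Icc 1 (m-1), c j * d j 0 := by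
      rw [← Finset.sum_sub_distrib]
      exact Finset.sum_congr rfl fun j _ => by ring
    rw [h1, hsplit (N:ℝ)]
    ring
  -- limits
  rw [← Filter.tendsto_add_atTop_iff_nat 1]
  have heq : (fun N : ℕ => ∑ k ∈ Finset.range (N+1), f k - emG m₀ F ((N+1 : ℕ) : ℝ))
      = fun N : ℕ => (f 0 - emG m F 1) + C * (∫ x in (0:ℝ)..(N:ℝ), g x)
        + ∑ j ∈ Finset.Icc m₀ (m-1), c j * d j N := funext hseq
  simp only [Nat.cast_add, Nat.cast_one] at heq ⊢
  rw [show (fun n : ℕ => ∑ k ∈ Finset.range (n+1), f k - emG m₀ F ((n:ℝ) + 1))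
    = fun N : ℕ => (f 0 - emG m F 1) + C * (∫ x in (0:ℝ)..(N:ℝ), g x)
        + ∑ j ∈ Finset.Icc m₀ (m-1), c j * d j N from heq]
  have hlim1 : Filter.Tendsto (fun N : ℕ => C * (∫ x in (0:ℝ)..(N:ℝ), g x)) Filter.atTop
      (nhds (C * ∫ x in Set.Ici (0:ℝ), g x)) := by
    rw [integral_Ici_eq_integral_Ioi]
    exact (MeasureTheory.intervalIntegral_tendsto_integral_Ioi 0
      (hg_int.mono_set Set.Ioi_subset_Ici_self) tendsto_natCast_atTop_atTop).const_mul C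
  have hlim2 : Filter.Tendsto (fun N : ℕ => ∑ j ∈ Finset.Icc m₀ (m-1), c j * d j N)
      Filter.atTop (nhds 0) := by
    have h := tendsto_finset_sum (Finset.Icc m₀ (m-1))
      (f := fun j (N : ℕ) => c j * d j N)
      (fun j hj => by
        have hj' := Finset.mem_Icc.mp hj
        have := ((hto0 j hj'.1 hj'.2).comp tendsto_natCast_atTop_atTop).const_mul (c j)
        simpa using this)
    simpa using h
  have := (tendsto_const_nhds (x := f 0 - emG m F 1) (f := Filter.atTop (α := ℕ))).add hlim1
    |>.add hlim2
  simpa [hg_def, emBP] using this
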